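/- Let j ∈ [J] and v ∈ W^j. Assume conditions (C1) and (C3). Then there exists ε > 0 such that B(v,ε) ⊆ W^j, and such that for every j' ∈ {0,1,…,J} with j' ≠ j and every t ∈ [0,1], B(tv, ε) ∩ W^{j'} = ∅. -/
import Mathlib


open Set Topology

noncomputable section

namespace Paper

abbrev Vec (d : ℕ) := EuclideanSpace ℝ (Fin d)

/-- The cone generated by a set: `{λ x : λ > 0, x ∈ A}`. -/
def cone {d : ℕ} (A : Set (Vec d)) : Set (Vec d) :=
  {y | ∃ l : ℝ, 0 < l ∧ ∃ x ∈ A, y = l • x}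

lemma notMem_closure_of_disjoint {d : ℕ} {U S : Set (Vec d)} {p : Vec d}
    (hU : IsOpen U) (hp : p ∈ U) (h : U ∩ S = ∅) : p ∉ closure S := by
  intro hc
  rcases mem_closure_iff.1 hc U hU hp with ⟨x, hxU, hxS⟩
  exact absurd (Set.mem_inter hxU hxS) (by simp [h])

open Pointwise in
lemma cone_isOpen {d : ℕ} {A : Set (Vec d)} (hA : IsOpen A) : IsOpen (cone A) := by
  have hrw : cone A = ⋃ l : {l : ℝ // 0 < l}, (l.1 • A : Set (Vec d)) := by
    ext y
    constructor
    · rintro ⟨l, hl, x, hx, rfl⟩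
      exact Set.mem_iUnion.2 ⟨⟨l, hl⟩, ⟨x, hx, rfl⟩⟩
    · intro hy
      rcases Set.mem_iUnion.1 hy with ⟨l, x, hx, rfl⟩
      exact ⟨l.1, l.2, x, hx, rfl⟩
  rw [hrw]
  exact isOpen_iUnion fun l => hA.smul₀ (ne_of_gt l.2)

lemma subset_cone {d : ℕ} (A : Set (Vec d)) : A ⊆ cone A :=
  fun x hx => ⟨1, one_pos, x, hx, (one_smul ℝ x).symm⟩

theorem statement16
    {d J : ℕ} (W0 : Set (Vec d)) (W : Fin J → Set (Vec d)) (m : Vec d)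
    (hW0open : IsOpen W0) (hWopen : ∀ j, IsOpen (W j)) (hWconv : ∀ j, Convex ℝ (W j))
    (hdisj0 : ∀ j, Disjoint W0 (W j))
    (hdisj : ∀ j j', j ≠ j' → Disjoint (W j) (W j'))
    (hC1 : ∃ δ > (0 : ℝ), ∀ j, cone (Metric.ball m δ) ∩ W j = ∅)
    (hC3a : ∀ j j', j ≠ j' → cone (W j) ∩ cone (W j') = ∅)
    (hC3b : ∀ j, cone W0 ∩ cone (W j) = ∅)
    (hC3c : ∃ δ > (0 : ℝ), Metric.ball (0 : Vec d) δ ∩ W0 = ∅ ∧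
      ∀ j, Metric.ball (0 : Vec d) δ ∩ W j = ∅)
    (j : Fin J) (v : Vec d) (hv : v ∈ W j) :
    ∃ ε > (0 : ℝ), Metric.ball v ε ⊆ W j ∧
      ∀ t ∈ Set.Icc (0 : ℝ) 1,
        Metric.ball (t • v) ε ∩ W0 = ∅ ∧
        ∀ j' : Fin J, j' ≠ j → Metric.ball (t • v) ε ∩ W j' = ∅ := by
  obtain ⟨δ₀, hδ₀, hb0, hbj⟩ := hC3c
  set K : Set (Vec d) := (fun t : ℝ => t • v) '' Set.Icc 0 1 with hKdef
  have hKcomp : IsCompact K := isCompact_Icc.image (by continuity)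
  set C : Set (Vec d) :=
    closure W0 ∪ ⋃ j' : {j' : Fin J // j' ≠ j}, closure (W j'.1) with hCdef
  have hCclosed : IsClosed C :=
    isClosed_closure.union (isClosed_iUnion_of_finite fun _ => isClosed_closure)
  have hconeopen : IsOpen (cone (W j)) := cone_isOpen (hWopen j)
  -- cone (W j) is disjoint from W0 and each W j' (j' ≠ j)
  have hcone0 : cone (W j) ∩ W0 = ∅ := by
    rw [Set.eq_empty_iff_forall_notMem]
    rintro x ⟨hx1, hx2⟩
    have : x ∈ cone W0 ∩ cone (W j) := ⟨subset_cone _ hx2, hx1⟩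
    rw [hC3b j] at this; exact this
  have hconej : ∀ j' : Fin J, j' ≠ j → cone (W j) ∩ W j' = ∅ := by
    intro j' hj'
    rw [Set.eq_empty_iff_forall_notMem]
    rintro x ⟨hx1, hx2⟩
    have : x ∈ cone (W j) ∩ cone (W j') := ⟨hx1, subset_cone _ hx2⟩
    rw [hC3a j j' (fun h => hj' h.symm)] at this; exact this
  have hdisjKC : Disjoint K C := by
    rw [Set.disjoint_left]
    rintro p ⟨t, ⟨ht0, ht1⟩, rfl⟩ hpC
    have hnot : ∀ S : Set (Vec d), (Metric.ball (0 : Vec d) δ₀ ∩ S = ∅) →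
        (cone (W j) ∩ S = ∅) → t • v ∉ closure S := by
      intro S hS0 hSc
      rcases eq_or_lt_of_le ht0 with h0 | h0
      · rw [← h0, zero_smul]
        exact notMem_closure_of_disjoint Metric.isOpen_ball
          (Metric.mem_ball_self hδ₀) hS0
      · exact notMem_closure_of_disjoint hconeopen ⟨t, h0, v, hv, rfl⟩ hSc
    rcases hpC with h | h
    · exact hnot W0 hb0 hcone0 h
    · rcases Set.mem_iUnion.1 h with ⟨⟨j', hj'⟩, hmem⟩
      exact hnot (W j') (hbj j') (hconej j' hj') hmem
  obtain ⟨η, hη, hthick⟩ := hdisjKC.exists_thickenings hKcomp hCclosed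
  obtain ⟨r, hr, hball⟩ := Metric.isOpen_iff.1 (hWopen j) v hv
  have hεpos : (0:ℝ) < min η r := lt_min hη hr
  have key : ∀ t ∈ Set.Icc (0:ℝ) 1, ∀ S : Set (Vec d), S ⊆ C →
      Metric.ball (t • v) (min η r) ∩ S = ∅ := by
    intro t ht S hSC
    rw [Set.eq_empty_iff_forall_notMem]
    rintro x ⟨hx1, hx2⟩
    have hxK : x ∈ Metric.thickening η K := by
      rw [Metric.mem_thickening_iff]
      exact ⟨t • v, ⟨t, ht, rfl⟩, lt_of_lt_of_le (Metric.mem_ball.1 hx1) (min_le_left _ _)⟩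
    have hxC : x ∈ Metric.thickening η C :=
      Metric.self_subset_thickening hη C (hSC hx2)
    exact Set.disjoint_left.1 hthick hxK hxC
  refine ⟨min η r, hεpos, ?_, ?_⟩
  · exact fun x hx => hball (Metric.ball_subset_ball (min_le_right _ _) hx)
  · intro t ht
    refine ⟨key t ht W0 (fun x hx => Or.inl (subset_closure hx)), ?_⟩
    intro j' hj'
    exact key t ht (W j') (fun x hx =>
      Or.inr (Set.mem_iUnion.2 ⟨⟨j', hj'⟩, subset_closure hx⟩))

end Paper
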